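/- The cofactor of the entry in position (i,1) of the matrix Φ^{(m)}_{t,s} equals ξ_{t,s+i}, the principal determinant with shifted starting index; i.e., (−1)^{i+1} times the (i,1)-minor of Φ^{(m)}_{t,s} equals det(Φ^{(1)}_{t,s+i}). -/
import Mathlib

def Phi (p : ℕ) (φ : ℕ → ℤ → ℂ) (m : ℕ) (s : ℤ) (k : ℕ) :
    Matrix (Fin k) (Fin k) ℂ :=
  Matrix.of fun i j =>
    if (j : ℕ) = (i : ℕ) + 1 then -1
    else if (j : ℕ) = 0 then
      (if (i : ℕ) + m ≤ p then φ ((i : ℕ) + m) (s + (i : ℕ) + 1) else 0)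
    else if (j : ℕ) ≤ (i : ℕ) then
      (if (i : ℕ) - (j : ℕ) + 1 ≤ p then φ ((i : ℕ) - (j : ℕ) + 1) (s + (i : ℕ) + 1)
        else 0)
    else 0

def xi (p : ℕ) (φ : ℕ → ℤ → ℂ) (m : ℕ) (s t : ℤ) : ℂ :=
  if s < t then (Phi p φ m s (t - s).toNat).det
  else if t = s - (m : ℤ) + 1 then 1 else 0

theorem stmt14 (p : ℕ) (hp : 1 ≤ p) (φ : ℕ → ℤ → ℂ)
    (m : ℕ) (hm1 : 1 ≤ m) (hmp : m ≤ p) (s t : ℤ) (ht : s < t)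
    (k : ℕ) (hk : (t - s).toNat = k + 1)
    (i : ℕ) (hi1 : 1 ≤ i) (hik : i ≤ k + 1) :
    (-1 : ℂ) ^ (i + 1) *
      ((Phi p φ m s (k + 1)).submatrix
        ((⟨i - 1, by omega⟩ : Fin (k + 1)).succAbove)
        ((⟨0, by omega⟩ : Fin (k + 1)).succAbove)).det
      = xi p φ 1 (s + (i : ℤ)) t := by
  have hts : t - s = (k : ℤ) + 1 := by omega
  set r : ℕ := i - 1 with hr
  set n : ℕ := k + 1 - i with hn
  have hrn : r + n = k := by omega
  set N := ((Phi p φ m s (k + 1)).submatrix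
        ((⟨i - 1, by omega⟩ : Fin (k + 1)).succAbove)
        ((⟨0, by omega⟩ : Fin (k + 1)).succAbove)) with hN
  have hcol : ∀ b : Fin k,
      ((((⟨0, by omega⟩ : Fin (k + 1)).succAbove b)) : ℕ) = (b : ℕ) + 1 := by
    intro b; simp [Fin.succAbove, Fin.lt_def]
  have hrow : ∀ a : Fin k,
      ((((⟨i - 1, by omega⟩ : Fin (k + 1)).succAbove a)) : ℕ)
        = if (a : ℕ) < r then (a : ℕ) else (a : ℕ) + 1 := by
    intro a
    simp [Fin.succAbove, Fin.lt_def, ← hr]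
    split_ifs <;> rfl
  -- general entry formula for N
  have hNval : ∀ a b : Fin k, N a b =
      (if (b : ℕ) + 1 = (if (a : ℕ) < r then (a : ℕ) else (a : ℕ) + 1) + 1 then -1
      else if ((b : ℕ) + 1) ≤ (if (a : ℕ) < r then (a : ℕ) else (a : ℕ) + 1) then
        (if (if (a : ℕ) < r then (a : ℕ) else (a : ℕ) + 1) - ((b : ℕ) + 1) + 1 ≤ p then
          φ ((if (a : ℕ) < r then (a : ℕ) else (a : ℕ) + 1) - ((b : ℕ) + 1) + 1)
            (s + ((if (a : ℕ) < r then (a : ℕ) else (a : ℕ) + 1) : ℕ) + 1)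
          else 0)
      else 0) := by
    intro a b
    rw [hN, Matrix.submatrix_apply, Phi, Matrix.of_apply, hrow, hcol]
    simp
  let e : Fin r ⊕ Fin n ≃ Fin k := (finSumFinEquiv).trans (finCongr hrn)
  have heinl : ∀ a : Fin r, ((e (Sum.inl a)) : ℕ) = (a : ℕ) := by
    intro a; simp [e]
  have heinr : ∀ a : Fin n, ((e (Sum.inr a)) : ℕ) = r + (a : ℕ) := by
    intro a; simp [e]
  set A : Matrix (Fin r) (Fin r) ℂ := fun a b => N (e (Sum.inl a)) (e (Sum.inl b)) with hA
  set C : Matrix (Fin n) (Fin r) ℂ := fun a b => N (e (Sum.inr a)) (e (Sum.inl b)) with hC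
  have hblock : N.submatrix e e = Matrix.fromBlocks A 0 C (Phi p φ 1 (s + (i : ℤ)) n) := by
    ext x y
    cases x with
    | inl a =>
      cases y with
      | inl b => rfl
      | inr b =>
        -- top-right block is zero
        show N (e (Sum.inl a)) (e (Sum.inr b)) = 0
        rw [hNval, heinl, heinr]
        have ha : (a : ℕ) < r := a.2
        have h1 : ¬ (r + (b : ℕ) + 1 = (if (a : ℕ) < r then (a : ℕ) else (a : ℕ) + 1) + 1) := by
          split_ifs <;> omega
        have h2 : ¬ (r + (b : ℕ) + 1 ≤ (if (a : ℕ) < r then (a : ℕ) else (a : ℕ) + 1)) := by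
          split_ifs <;> omega
        rw [if_neg h1, if_neg h2]
    | inr a =>
      cases y with
      | inl b => rfl
      | inr b =>
        show N (e (Sum.inr a)) (e (Sum.inr b)) = Phi p φ 1 (s + (i : ℤ)) n a b
        rw [hNval, heinr, heinr]
        have ha : ¬ (r + (a : ℕ) < r) := by omega
        rw [if_neg ha, Phi, Matrix.of_apply]
        have hi' : (i : ℤ) = (r : ℤ) + 1 := by push_cast; omega
        by_cases hb1 : (b : ℕ) = (a : ℕ) + 1
        · have : r + (b : ℕ) + 1 = r + (a : ℕ) + 1 + 1 := by omega
          rw [if_pos this, if_pos hb1]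
        · have h1 : ¬ (r + (b : ℕ) + 1 = r + (a : ℕ) + 1 + 1) := by omega
          rw [if_neg h1, if_neg hb1]
          by_cases hb0 : (b : ℕ) = 0
          · have h2 : r + (b : ℕ) + 1 ≤ r + (a : ℕ) + 1 := by omega
            rw [if_pos h2, if_pos hb0]
            have h3 : r + (a : ℕ) + 1 - (r + (b : ℕ) + 1) + 1 = (a : ℕ) + 1 := by omega
            rw [h3]
            have h4 : s + ((r + (a : ℕ) + 1 : ℕ) : ℤ) + 1 = s + (i : ℤ) + ((a : ℕ) : ℤ) + 1 := by
              push_cast; omega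
            rw [h4]
          · rw [if_neg hb0]
            by_cases hba : (b : ℕ) ≤ (a : ℕ)
            · have h2 : r + (b : ℕ) + 1 ≤ r + (a : ℕ) + 1 := by omega
              rw [if_pos h2, if_pos hba]
              have h3 : r + (a : ℕ) + 1 - (r + (b : ℕ) + 1) + 1 = (a : ℕ) - (b : ℕ) + 1 := by omega
              rw [h3]
              have h4 : s + ((r + (a : ℕ) + 1 : ℕ) : ℤ) + 1 = s + (i : ℤ) + ((a : ℕ) : ℤ) + 1 := by
                push_cast; omega
              rw [h4]
            · have h2 : ¬ (r + (b : ℕ) + 1 ≤ r + (a : ℕ) + 1) := by omega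
              rw [if_neg h2, if_neg hba]
  have hdetA : A.det = (-1 : ℂ) ^ r := by
    rw [Matrix.det_of_lowerTriangular A (by
      intro a b hab
      have hab' : a < b := hab
      rw [hA]
      show N (e (Sum.inl a)) (e (Sum.inl b)) = 0
      rw [hNval, heinl, heinl]
      have ha : (a : ℕ) < r := a.2
      rw [if_pos ha]
      have h1 : ¬ ((b : ℕ) + 1 = (a : ℕ) + 1) := by
        have := (Fin.lt_def.mp hab'); omega
      have h2 : ¬ ((b : ℕ) + 1 ≤ (a : ℕ)) := by
        have := (Fin.lt_def.mp hab'); omega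
      rw [if_neg h1, if_neg h2])]
    have : ∀ a : Fin r, A a a = -1 := by
      intro a
      show N (e (Sum.inl a)) (e (Sum.inl a)) = -1
      rw [hNval, heinl]
      simp [a.2]
    simp [this]
  have hdetN : N.det = (-1 : ℂ) ^ r * (Phi p φ 1 (s + (i : ℤ)) n).det := by
    rw [← Matrix.det_submatrix_equiv_self e N, hblock,
      Matrix.det_fromBlocks_zero₁₂, hdetA]
  rw [hdetN]
  have hsign : (-1 : ℂ) ^ (i + 1) * ((-1 : ℂ) ^ r * (Phi p φ 1 (s + (i : ℤ)) n).det)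
      = (Phi p φ 1 (s + (i : ℤ)) n).det := by
    rw [← mul_assoc, ← pow_add]
    have : i + 1 + r = 2 * i := by omega
    rw [this, pow_mul]
    simp
  rw [hsign, xi]
  by_cases hik' : i ≤ k
  · have h1 : s + (i : ℤ) < t := by omega
    rw [if_pos h1]
    have h2 : (t - (s + (i : ℤ))).toNat = n := by omega
    rw [h2]
  · have hieq : i = k + 1 := by omega
    have h1 : ¬ (s + (i : ℤ) < t) := by omega
    have h2 : t = s + (i : ℤ) - ((1 : ℕ) : ℤ) + 1 := by push_cast; omega
    rw [if_neg h1, if_pos h2]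
    have hn0 : n = 0 := by omega
    haveI : IsEmpty (Fin n) := ⟨fun x => absurd x.2 (by omega)⟩
    exact Matrix.det_isEmpty
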